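/- Let $p$ be an odd prime and $G$ the non-abelian group of order $p^3$ and exponent $p$. Every sequence $S$ over $G$ of length $3p-2$ having at least $p-2$ terms in the center $Z(G)$ contains a nonempty subsequence whose terms, in some order, multiply to the identity. -/

import Mathlib

set_option maxHeartbeats 1000000


/-- Explicit Heisenberg-type group on `(ZMod p)³`. -/
@[ext]
structure Heis (p : ℕ) where
  x : ZMod p
  y : ZMod p
  z : ZMod p
deriving DecidableEq

namespace Heis

variable {p : ℕ}

instance : Group (Heis p) where
  mul u v := ⟨u.x + v.x, u.y + v.y, u.z + v.z - u.y * v.x⟩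
  one := ⟨0, 0, 0⟩
  inv u := ⟨-u.x, -u.y, -u.z - u.x * u.y⟩
  mul_assoc u v w := by
    refine Heis.ext ?_ ?_ ?_
    · show (u.x + v.x) + w.x = u.x + (v.x + w.x); ring
    · show (u.y + v.y) + w.y = u.y + (v.y + w.y); ring
    · show (u.z + v.z - u.y * v.x) + w.z - (u.y + v.y) * w.x
        = u.z + (v.z + w.z - v.y * w.x) - u.y * (v.x + w.x); ring
  one_mul u := by
    refine Heis.ext ?_ ?_ ?_
    · show 0 + u.x = u.x; ring
    · show 0 + u.y = u.y; ring
    · show 0 + u.z - 0 * u.x = u.z; ring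
  mul_one u := by
    refine Heis.ext ?_ ?_ ?_
    · show u.x + 0 = u.x; ring
    · show u.y + 0 = u.y; ring
    · show u.z + 0 - u.y * 0 = u.z; ring
  inv_mul_cancel u := by
    refine Heis.ext ?_ ?_ ?_
    · show -u.x + u.x = 0; ring
    · show -u.y + u.y = 0; ring
    · show (-u.z - u.x * u.y) + u.z - (-u.y) * u.x = 0; ring

@[simp] lemma mul_x (u v : Heis p) : (u * v).x = u.x + v.x := rfl
@[simp] lemma mul_y (u v : Heis p) : (u * v).y = u.y + v.y := rfl
@[simp] lemma mul_z (u v : Heis p) : (u * v).z = u.z + v.z - u.y * v.x := rfl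
@[simp] lemma one_x : (1 : Heis p).x = 0 := rfl
@[simp] lemma one_y : (1 : Heis p).y = 0 := rfl
@[simp] lemma one_z : (1 : Heis p).z = 0 := rfl

lemma mk_eq_one_iff {a b c : ZMod p} :
    (⟨a, b, c⟩ : Heis p) = 1 ↔ a = 0 ∧ b = 0 ∧ c = 0 := by
  constructor
  · intro h
    exact ⟨congrArg Heis.x h, congrArg Heis.y h, congrArg Heis.z h⟩
  · rintro ⟨rfl, rfl, rfl⟩; rfl

lemma prod_x (l : List (Heis p)) : l.prod.x = (l.map Heis.x).sum := by
  induction l with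
  | nil => rfl
  | cons v t ih => simp [ih]

lemma prod_y (l : List (Heis p)) : l.prod.y = (l.map Heis.y).sum := by
  induction l with
  | nil => rfl
  | cons v t ih => simp [ih]

/-- The "inversion correction" sum. -/
def Q : List (Heis p) → ZMod p
  | [] => 0
  | v :: t => v.y * (t.map Heis.x).sum + Q t

lemma prod_z (l : List (Heis p)) : l.prod.z = (l.map Heis.z).sum - Q l := by
  induction l with
  | nil => simp [Q]
  | cons v t ih =>
      simp only [List.prod_cons, mul_z, ih, List.map_cons, List.sum_cons, Q, prod_x]
      ring

lemma Q_swap (g h : Heis p) (t : List (Heis p)) :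
    Q (g :: h :: t) = Q (h :: g :: t) + g.y * h.x - h.y * g.x := by
  simp only [Q, List.map_cons, List.sum_cons]
  ring

lemma two_mul_Q (l : List (Heis p))
    (hC : ∀ u ∈ l, ∀ v ∈ l, u.x * v.y = v.x * u.y) :
    2 * Q l = (l.map Heis.x).sum * (l.map Heis.y).sum
      - (l.map (fun u => u.x * u.y)).sum := by
  induction l with
  | nil => simp [Q]
  | cons v t ih =>
      have hC' : ∀ u ∈ t, ∀ w ∈ t, u.x * w.y = w.x * u.y := fun u hu w hw =>
        hC u (List.mem_cons_of_mem _ hu) w (List.mem_cons_of_mem _ hw)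
      have key : v.y * (t.map Heis.x).sum = v.x * (t.map Heis.y).sum := by
        have h1 : (t.map fun u => v.y * u.x) = t.map fun u => v.x * u.y := by
          apply List.map_congr_left
          intro u hu
          have := hC u (List.mem_cons_of_mem _ hu) v (List.mem_cons_self)
          linear_combination this
        have h2 := List.sum_map_mul_left t Heis.x v.y
        have h3 := List.sum_map_mul_left t Heis.y v.x
        rw [← h2, ← h3, h1]
      simp only [Q, List.map_cons, List.sum_cons, mul_add, ih hC']
      linear_combination key

end Heis

open Multiset in
lemma pot_lemma {p : ℕ} (hp : p.Prime) {α : Type*} (f : α → ZMod p) (E : Multiset α)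
    (hE : ∀ e ∈ E, f e ≠ 0) :
    min p (Multiset.card E + 1)
      ≤ ((E.powerset.map (fun t => (t.map f).sum)).toFinset).card := by
  haveI : Fact p.Prime := ⟨hp⟩
  induction E using Multiset.induction_on with
  | empty =>
      simp only [powerset_zero, map_singleton, sum_zero, toFinset_singleton,
        Finset.card_singleton, card_zero]
      have := hp.pos
      omega
  | cons a E ih =>
      have ha : f a ≠ 0 := hE a (mem_cons_self a E)
      have hE' : ∀ e ∈ E, f e ≠ 0 := fun e he => hE e (mem_cons_of_mem he)
      set A' : Finset (ZMod p) := (E.powerset.map (fun t => (t.map f).sum)).toFinset with hA'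
      have hrw : ((a ::ₘ E).powerset.map (fun t => (t.map f).sum)).toFinset
          = A' ∪ A'.image (fun s => f a + s) := by
        rw [powerset_cons, Multiset.map_add, toFinset_add, Multiset.map_map]
        congr 1
        rw [hA', ← toFinset_map, Multiset.map_map]
        refine congrArg _ (Multiset.map_congr rfl ?_)
        intro t _
        simp
      rw [hrw]
      have h0A' : (0 : ZMod p) ∈ A' := by
        rw [hA', mem_toFinset]
        refine Multiset.mem_map.2 ⟨0, ?_, rfl⟩
        simp [Multiset.mem_powerset]
      by_cases hple : p ≤ A'.card
      · calc min p (Multiset.card (a ::ₘ E) + 1) ≤ p := min_le_left _ _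
          _ ≤ A'.card := hple
          _ ≤ _ := Finset.card_le_card Finset.subset_union_left
      · by_cases himg : A'.image (fun s => f a + s) ⊆ A'
        · exfalso
          have hclosed : ∀ s ∈ A', f a + s ∈ A' := by
            intro s hs
            exact himg (Finset.mem_image_of_mem _ hs)
          have hn : ∀ n : ℕ, ((n : ZMod p) * f a) ∈ A' := by
            intro n
            induction n with
            | zero => simpa using h0A'
            | succ n ihn =>
                have := hclosed _ ihn
                have heq : ((n+1 : ℕ) : ZMod p) * f a = f a + (n : ZMod p) * f a := by
                  push_cast; ring
                rwa [heq]
          have huniv : A' = Finset.univ := by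
            refine Finset.eq_univ_iff_forall.2 (fun t => ?_)
            have := hn (t * (f a)⁻¹).val
            rwa [ZMod.natCast_val, ZMod.cast_id, mul_assoc, inv_mul_cancel₀ ha, mul_one] at this
          rw [huniv, Finset.card_univ, ZMod.card] at hple
          omega
        · obtain ⟨b, hbmem, hbnot⟩ := Finset.not_subset.1 himg
          have hsub : insert b A' ⊆ A' ∪ A'.image (fun s => f a + s) := by
            intro t ht
            rcases Finset.mem_insert.1 ht with rfl | ht
            · exact Finset.mem_union_right _ hbmem
            · exact Finset.mem_union_left _ ht
          have hcard : A'.card + 1 ≤ (A' ∪ A'.image (fun s => f a + s)).card := by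
            have := Finset.card_le_card hsub
            rwa [Finset.card_insert_of_notMem hbnot] at this
          have := ih hE'
          rw [Multiset.card_cons]
          omega

lemma exists_ne_of_dvd_card {β : Type*} {p : ℕ} (hp : 2 ≤ p) (inst : Fintype β)
    (h : p ∣ @Fintype.card β inst) (b0 : β) : ∃ b : β, b ≠ b0 := by
  have hpos : 0 < @Fintype.card β inst := @Fintype.card_pos_iff β inst |>.2 ⟨b0⟩
  have := Nat.le_of_dvd hpos h
  exact @Fintype.exists_ne_of_one_lt_card β inst (by omega) b0

open MvPolynomial in
lemma cw_extract {p : ℕ} (hp : p.Prime) {α : Type*} (S : Multiset α)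
    (ψ : Fin 3 → α → ZMod p) (hcard : 3 * (p - 1) < Multiset.card S) :
    ∃ T : Multiset α, T ≤ S ∧ T ≠ 0 ∧ ∀ j : Fin 3, (T.map (ψ j)).sum = 0 := by
  haveI : Fact p.Prime := ⟨hp⟩
  classical
  set l : List α := S.toList with hl
  have hlS : (l : Multiset α) = S := S.coe_toList
  set N := l.length with hN
  have hNS : N = Multiset.card S := by rw [hN, ← hlS]; simp
  set f : Fin 3 → MvPolynomial (Fin N) (ZMod p) :=
    fun j => ∑ i : Fin N, MvPolynomial.C (ψ j (l.get i)) * (MvPolynomial.X i) ^ (p - 1)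
    with hf
  have hdeg : ∀ j, (f j).totalDegree ≤ p - 1 := by
    intro j
    refine le_trans (totalDegree_finset_sum _ _) ?_
    refine Finset.sup_le (fun i _ => ?_)
    refine le_trans (totalDegree_mul _ _) ?_
    simp [totalDegree_C, totalDegree_X_pow]
  have h3N : 3 * (p - 1) < N := by omega
  have hsum : (∑ j : Fin 3, (f j).totalDegree) < Fintype.card (Fin N) := by
    rw [Fintype.card_fin]
    calc (∑ j : Fin 3, (f j).totalDegree) ≤ ∑ _j : Fin 3, (p - 1) :=
          Finset.sum_le_sum (fun j _ => hdeg j)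
      _ = 3 * (p - 1) := by simp [Finset.sum_const, mul_comm]
      _ < N := h3N
  have hdvd := char_dvd_card_solutions_of_fintype_sum_lt p hsum
  have heval : ∀ (x : Fin N → ZMod p) (j : Fin 3),
      eval x (f j) = ∑ i : Fin N, ψ j (l.get i) * (x i) ^ (p - 1) := by
    intro x j
    rw [hf]
    simp [map_sum]
  have hzero : ∀ j : Fin 3, eval (fun _ => (0 : ZMod p)) (f j) = 0 := by
    intro j
    rw [heval]
    have hppos : p - 1 ≠ 0 := by have := hp.two_le; omega
    simp [zero_pow hppos]
  obtain ⟨⟨x, hxsol⟩, hxne⟩ :=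
    exists_ne_of_dvd_card hp.two_le _ hdvd ⟨fun _ => 0, hzero⟩
  have hxne0 : ∃ i, x i ≠ 0 := by
    by_contra h
    push_neg at h
    exact hxne (Subtype.ext (funext h))
  set I : Finset (Fin N) := Finset.univ.filter (fun i => x i ≠ 0) with hI
  refine ⟨I.val.map l.get, ?_, ?_, ?_⟩
  · calc I.val.map l.get ≤ Finset.univ.val.map l.get :=
          Multiset.map_le_map (Finset.val_le_iff.2 (Finset.subset_univ I))
      _ = S := by rw [Fin.univ_val_map, List.ofFn_get, hlS]
  · obtain ⟨i0, hi0⟩ := hxne0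
    intro h
    have : l.get i0 ∈ I.val.map l.get :=
      Multiset.mem_map_of_mem _ (by simp [hI, hi0])
    rw [h] at this
    simp at this
  · intro j
    have h1 : (Multiset.map (ψ j) (I.val.map l.get)).sum = ∑ i ∈ I, ψ j (l.get i) := by
      rw [Multiset.map_map]
      rfl
    rw [h1]
    have h2 : ∑ i ∈ I, ψ j (l.get i) = ∑ i : Fin N, ψ j (l.get i) * (x i) ^ (p - 1) := by
      rw [hI, Finset.sum_filter]
      refine Finset.sum_congr rfl (fun i _ => ?_)
      by_cases hxi : x i ≠ 0
      · rw [if_pos hxi, ZMod.pow_card_sub_one_eq_one hxi, mul_one]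
      · rw [if_neg hxi]
        push_neg at hxi
        have hppos : p - 1 ≠ 0 := by have := hp.two_le; omega
        rw [hxi, zero_pow hppos, mul_zero]
    rw [h2, ← heval]
    exact hxsol j

/-- A sequence (multiset) over `G` has a product-one subsequence if some nonempty
list of its terms (a sub-multiset) multiplies to the identity. -/
def HasProdOneSubseq {G : Type*} [Group G] (S : Multiset G) : Prop :=
  ∃ l : List G, l ≠ [] ∧ (l : Multiset G) ≤ S ∧ l.prod = 1

namespace Heis

lemma central_list_prod {p : ℕ} (lc : List (Heis p)) (h : ∀ u ∈ lc, u.x = 0 ∧ u.y = 0) :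
    lc.prod = ⟨0, 0, (lc.map Heis.z).sum⟩ := by
  induction lc with
  | nil => rfl
  | cons v t ih =>
      have hv := h v (List.mem_cons_self)
      have ht := ih (fun u hu => h u (List.mem_cons_of_mem _ hu))
      refine Heis.ext ?_ ?_ ?_ <;>
        simp [List.prod_cons, ht, hv.1, hv.2]

theorem core {p : ℕ} (hp : p.Prime) (hodd : Odd p) (S : Multiset (Heis p))
    (hlen : Multiset.card S = 3 * p - 2)
    (W : Multiset (Heis p)) (hWS : W ≤ S) (hWcard : p - 2 ≤ Multiset.card W)
    (hWc : ∀ w ∈ W, w.x = 0 ∧ w.y = 0) :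
    HasProdOneSubseq S := by
  classical
  haveI : Fact p.Prime := ⟨hp⟩
  have hp3 : 3 ≤ p := by
    rcases hodd with ⟨k, hk⟩
    have := hp.two_le
    omega
  by_cases h1 : (1 : Heis p) ∈ S
  · exact ⟨[1], by simp, by
      rw [show (([1] : List (Heis p)) : Multiset (Heis p)) = {1} from rfl]
      exact Multiset.singleton_le.2 h1, List.prod_singleton⟩
  -- 2 is invertible
  have h2ne : (2 : ZMod p) ≠ 0 := by
    intro h
    have h2 : ((2 : ℕ) : ZMod p) = 0 := by exact_mod_cast h
    have := (ZMod.natCast_eq_zero_iff 2 p).1 h2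
    have := Nat.le_of_dvd (by norm_num) this
    omega
  set i2 : ZMod p := (2 : ZMod p)⁻¹ with hi2
  have h2i : (2 : ZMod p) * i2 = 1 := mul_inv_cancel₀ h2ne
  -- Chevalley-Warning
  obtain ⟨T, hTS, hTne, hTsum⟩ := cw_extract hp S
    ![Heis.x, Heis.y, fun u => u.z + u.x * u.y * i2] (by rw [hlen]; omega)
  have hTx : (T.map Heis.x).sum = 0 := by simpa using hTsum 0
  have hTy : (T.map Heis.y).sum = 0 := by simpa using hTsum 1
  have hTz : (T.map (fun u => u.z + u.x * u.y * i2)).sum = 0 := by simpa using hTsum 2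
  have hTz' : (T.map Heis.z).sum + (T.map (fun u => u.x * u.y)).sum * i2 = 0 := by
    rw [← Multiset.sum_map_mul_right, ← Multiset.sum_map_add]
    exact hTz
  by_cases hC : ∀ u ∈ T, ∀ v ∈ T, u.x * v.y = v.x * u.y
  · -- all pairwise "colinear": product of any ordering is 1
    refine ⟨T.toList, ?_, ?_, ?_⟩
    · rw [ne_eq, Multiset.toList_eq_nil]; exact hTne
    · rw [Multiset.coe_toList]; exact hTS
    · have hsum : ∀ f : Heis p → ZMod p, (T.toList.map f).sum = (T.map f).sum := by
        intro f
        conv_rhs => rw [← Multiset.coe_toList T]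
        rfl
      have hCl : ∀ u ∈ T.toList, ∀ v ∈ T.toList, u.x * v.y = v.x * u.y := by
        intro u hu v hv
        exact hC u (by rwa [← Multiset.mem_toList]) v (by rwa [← Multiset.mem_toList])
      have h2Q := two_mul_Q T.toList hCl
      rw [hsum Heis.x, hsum Heis.y, hsum (fun u => u.x * u.y), hTx, hTy] at h2Q
      have hQ : Q T.toList = - (T.map (fun u => u.x * u.y)).sum * i2 := by
        have : Q T.toList = (2 * Q T.toList) * i2 := by
          rw [mul_comm (2 : ZMod p) (Q T.toList), mul_assoc, h2i, mul_one]
        rw [this, h2Q]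
        ring
      refine Heis.ext ?_ ?_ ?_
      · rw [prod_x, hsum Heis.x, hTx]; rfl
      · rw [prod_y, hsum Heis.y, hTy]; rfl
      · rw [prod_z, hsum Heis.z, hQ]
        show (T.map Heis.z).sum - -(T.map (fun u => u.x * u.y)).sum * i2 = 0
        linear_combination hTz'
  · -- there is a non-commuting pair
    push_neg at hC
    obtain ⟨g, hgT, h, hhT, hviol⟩ := hC
    have hgh : g ≠ h := by
      intro e; subst e; exact hviol rfl
    have hgnc : ¬(g.x = 0 ∧ g.y = 0) := by
      rintro ⟨e1, e2⟩
      exact hviol (by rw [e1, e2]; ring)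
    have hhnc : ¬(h.x = 0 ∧ h.y = 0) := by
      rintro ⟨e1, e2⟩
      exact hviol (by rw [e1, e2]; ring)
    set nc : Heis p → Prop := fun u => ¬(u.x = 0 ∧ u.y = 0) with hnc
    set T₁ : Multiset (Heis p) := T.filter nc with hT₁
    have hgT₁ : g ∈ T₁ := Multiset.mem_filter.2 ⟨hgT, hgnc⟩
    have hhT₁ : h ∈ T₁ := Multiset.mem_filter.2 ⟨hhT, hhnc⟩
    have hhT₁' : h ∈ T₁.erase g := (Multiset.mem_erase_of_ne hgh.symm).2 hhT₁
    set T₂ : Multiset (Heis p) := (T₁.erase g).erase h with hT₂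
    have hT₁eq : g ::ₘ h ::ₘ T₂ = T₁ := by
      rw [hT₂, Multiset.cons_erase hhT₁', Multiset.cons_erase hgT₁]
    -- sums over T₁ vanish in x and y
    have hsplit : ∀ f : Heis p → ZMod p, (∀ u, ¬ nc u → f u = 0) →
        (T₁.map f).sum = (T.map f).sum := by
      intro f hf
      conv_rhs => rw [← Multiset.filter_add_not nc T]
      rw [Multiset.map_add, Multiset.sum_add, ← hT₁]
      have : ((T.filter (fun u => ¬ nc u)).map f).sum = 0 := by
        apply Multiset.sum_eq_zero
        intro a ha
        obtain ⟨u, hu, rfl⟩ := Multiset.mem_map.1 ha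
        exact hf u ((Multiset.mem_filter.1 hu).2)
      rw [this, add_zero]
    have hT₁x : (T₁.map Heis.x).sum = 0 := by
      rw [hsplit Heis.x (fun u hu => (not_not.1 hu).1)]; exact hTx
    have hT₁y : (T₁.map Heis.y).sum = 0 := by
      rw [hsplit Heis.y (fun u hu => (not_not.1 hu).2)]; exact hTy
    -- lists
    set t : List (Heis p) := T₂.toList with ht
    have htcoe : (t : Multiset (Heis p)) = T₂ := Multiset.coe_toList T₂
    have hl₁coe : ((g :: h :: t : List (Heis p)) : Multiset (Heis p)) = T₁ := by
      rw [← Multiset.cons_coe, ← Multiset.cons_coe, htcoe, hT₁eq]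
    have hl₂coe : ((h :: g :: t : List (Heis p)) : Multiset (Heis p)) = T₁ := by
      rw [← Multiset.cons_coe, ← Multiset.cons_coe, htcoe, Multiset.cons_swap, hT₁eq]
    have hlistsum : ∀ (l : List (Heis p)) (f : Heis p → ZMod p),
        (l : Multiset (Heis p)) = T₁ → (l.map f).sum = (T₁.map f).sum := by
      intro l f hl
      rw [← hl]
      rfl
    have hprodl : ∀ l : List (Heis p), (l : Multiset (Heis p)) = T₁ →
        l.prod = ⟨0, 0, (T₁.map Heis.z).sum - Q l⟩ := by
      intro l hl
      refine Heis.ext ?_ ?_ ?_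
      · rw [prod_x, hlistsum l Heis.x hl, hT₁x]
      · rw [prod_y, hlistsum l Heis.y hl, hT₁y]
      · rw [prod_z, hlistsum l Heis.z hl]
    -- the two candidate values
    set ζ₁ : ZMod p := (T₁.map Heis.z).sum - Q (g :: h :: t) with hζ₁
    set ζ₂ : ZMod p := (T₁.map Heis.z).sum - Q (h :: g :: t) with hζ₂
    have hζne : ζ₁ ≠ ζ₂ := by
      intro e
      rw [hζ₁, hζ₂] at e
      have hq : Q (g :: h :: t) = Q (h :: g :: t) := sub_right_injective e
      have hsw := Q_swap g h t
      rw [hq] at hsw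
      have hgy : g.y * h.x - h.y * g.x = 0 := by linear_combination -hsw
      exact hviol (by linear_combination -hgy)
    -- pot of central elements
    set F : Multiset (Heis p) → ZMod p := fun m => (m.map Heis.z).sum with hF
    set A : Finset (ZMod p) := ((W.powerset.map F).toFinset) with hA
    have hWz : ∀ w ∈ W, w.z ≠ 0 := by
      intro w hw hz
      have hwc := hWc w hw
      have : w = 1 := Heis.ext hwc.1 hwc.2 hz
      exact h1 (this ▸ Multiset.mem_of_le hWS hw)
    have hAcard : p - 1 ≤ A.card := by
      have := pot_lemma hp Heis.z W hWz
      have hmin : p - 1 ≤ min p (Multiset.card W + 1) := by omega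
      exact le_trans hmin this
    have hmem : -ζ₁ ∈ A ∨ -ζ₂ ∈ A := by
      by_contra hcon
      push_neg at hcon
      have hsub : A ⊆ (Finset.univ : Finset (ZMod p)) \ {-ζ₁, -ζ₂} := by
        intro a ha
        rw [Finset.mem_sdiff]
        refine ⟨Finset.mem_univ _, ?_⟩
        intro hmem
        rcases Finset.mem_insert.1 hmem with rfl | hmem2
        · exact hcon.1 ha
        · rw [Finset.mem_singleton] at hmem2
          subst hmem2
          exact hcon.2 ha
      have hcard2 : ({-ζ₁, -ζ₂} : Finset (ZMod p)).card = 2 := by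
        rw [Finset.card_insert_of_notMem (by simp [hζne, neg_inj]), Finset.card_singleton]
      have := Finset.card_le_card hsub
      rw [Finset.card_sdiff_of_subset (Finset.subset_univ _), Finset.card_univ, ZMod.card, hcard2] at this
      omega
    -- extract the winning configuration
    obtain ⟨l₀, θ, hl₀coe, hθ⟩ :
        ∃ (l₀ : List (Heis p)) (θ : ZMod p),
          ((l₀ : Multiset (Heis p)) = T₁ ∧ l₀.prod = ⟨0, 0, θ⟩) ∧ -θ ∈ A := by
      rcases hmem with hm | hm
      · exact ⟨g :: h :: t, ζ₁, ⟨hl₁coe, by rw [hprodl _ hl₁coe, hζ₁]⟩, hm⟩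
      · exact ⟨h :: g :: t, ζ₂, ⟨hl₂coe, by rw [hprodl _ hl₂coe, hζ₂]⟩, hm⟩
    obtain ⟨hl₀coe, hl₀prod⟩ := hl₀coe
    rw [hA, Multiset.mem_toFinset] at hθ
    obtain ⟨W', hW'pow, hW'sum⟩ := Multiset.mem_map.1 hθ
    have hW'W : W' ≤ W := Multiset.mem_powerset.1 hW'pow
    -- final list
    refine ⟨l₀ ++ W'.toList, ?_, ?_, ?_⟩
    · intro e
      have : l₀ = [] := by
        rcases List.append_eq_nil_iff.1 e with ⟨e1, _⟩
        exact e1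
      rw [this] at hl₀coe
      rw [show (([] : List (Heis p)) : Multiset (Heis p)) = 0 from rfl] at hl₀coe
      rw [← hl₀coe] at hgT₁
      simp at hgT₁
    · have hcoeadd : ((l₀ ++ W'.toList : List (Heis p)) : Multiset (Heis p))
          = (l₀ : Multiset (Heis p)) + (W'.toList : Multiset (Heis p)) := rfl
      rw [hcoeadd, hl₀coe, Multiset.coe_toList]
      have hfil1 : T₁ ≤ S.filter nc := by
        rw [hT₁]
        exact Multiset.filter_le_filter nc hTS
      have hfil2 : W' ≤ S.filter (fun u => ¬ nc u) := by
        have heq : W'.filter (fun u => ¬ nc u) = W' :=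
          Multiset.filter_eq_self.2
            (fun a ha => not_not_intro (hWc a (Multiset.mem_of_le hW'W ha)))
        calc W' = W'.filter (fun u => ¬ nc u) := heq.symm
          _ ≤ S.filter (fun u => ¬ nc u) :=
              Multiset.filter_le_filter _ (le_trans hW'W hWS)
      calc T₁ + W' ≤ S.filter nc + S.filter (fun u => ¬ nc u) := add_le_add hfil1 hfil2
        _ = S := Multiset.filter_add_not nc S
    · rw [List.prod_append, hl₀prod]
      have hW'c : ∀ u ∈ W'.toList, u.x = 0 ∧ u.y = 0 := by
        intro u hu
        exact hWc u (Multiset.mem_of_le hW'W (by rwa [← Multiset.mem_toList]))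
      rw [central_list_prod W'.toList hW'c]
      have h3 : ((W'.toList.map Heis.z).sum : ZMod p) = -θ := by
        have h4 : (W'.toList : Multiset (Heis p)) = W' := Multiset.coe_toList W'
        have h5 : ((W'.toList : Multiset (Heis p)).map Heis.z).sum = -θ := by
          rw [h4]; exact hW'sum
        exact h5
      rw [h3]
      refine Heis.ext ?_ ?_ ?_ <;> simp

end Heis

namespace Heis

def equivProd (p : ℕ) : (ZMod p × ZMod p × ZMod p) ≃ Heis p where
  toFun w := ⟨w.1, w.2.1, w.2.2⟩
  invFun v := (v.x, v.y, v.z)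
  left_inv w := rfl
  right_inv v := rfl

noncomputable instance fintypeHeis (p : ℕ) [NeZero p] : Fintype (Heis p) :=
  Fintype.ofEquiv _ (equivProd p)

lemma card_heis (p : ℕ) [NeZero p] : Fintype.card (Heis p) = p ^ 3 := by
  rw [← Fintype.card_congr (equivProd p)]
  simp only [Fintype.card_prod, ZMod.card]
  ring

end Heis

section Classify

variable {p : ℕ} {G : Type*} [Group G] [Fintype G]

theorem heis_iso (hp : p.Prime) (hcard : Fintype.card G = p ^ 3)
    (hexp : Monoid.exponent G = p) (hna : ∃ a b : G, a * b ≠ b * a) :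
    ∃ Φ : Heis p →* G, Function.Bijective Φ ∧
      ∀ v : Heis p, (Φ v) ∈ Subgroup.center G → v.x = 0 ∧ v.y = 0 := by
  haveI : Fact p.Prime := ⟨hp⟩
  haveI : NeZero p := ⟨hp.ne_zero⟩
  obtain ⟨a, b, hab⟩ := hna
  have hpow : ∀ g : G, g ^ p = 1 := fun g => by
    rw [← hexp]; exact Monoid.pow_exponent_eq_one g
  have hGcomm : ¬ ∀ x y : G, x * y = y * x := fun h => hab (h a b)
  -- the quotient by the center is commutative
  have hnatcard : Nat.card G = p ^ 3 := by rw [Nat.card_eq_fintype_card, hcard]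
  obtain ⟨k, hk0, hkcard⟩ :=
    IsPGroup.card_center_eq_prime_pow (G := G) (p := p) hnatcard (by norm_num)
  have hQmul : Nat.card (G ⧸ Subgroup.center G) * Nat.card (Subgroup.center G) = p ^ 3 := by
    rw [← hnatcard]
    exact (Subgroup.card_eq_card_quotient_mul_card_subgroup _).symm
  have hQdvd : Nat.card (G ⧸ Subgroup.center G) ∣ p ^ 3 := ⟨_, hQmul.symm⟩
  obtain ⟨m, hm3, hQcard⟩ := (Nat.dvd_prime_pow hp).1 hQdvd
  have hmk : m + k = 3 := by
    have h1 : p ^ (m + k) = p ^ 3 := by rw [pow_add, ← hQcard, ← hkcard, hQmul]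
    exact Nat.pow_right_injective hp.two_le h1
  have hQcomm : ∀ x y : G ⧸ Subgroup.center G, x * y = y * x := by
    rcases (show m = 0 ∨ m = 1 ∨ m = 2 by omega) with hm | hm | hm
    · subst hm
      haveI : Subsingleton (G ⧸ Subgroup.center G) :=
        (Nat.card_eq_one_iff_unique.1 (by simpa using hQcard)).1
      intro x y
      exact Subsingleton.elim _ _
    · subst hm
      haveI : IsCyclic (G ⧸ Subgroup.center G) :=
        isCyclic_of_prime_card (by simpa using hQcard)
      exact fun x y => (hGcomm
        (commutative_of_cyclic_center_quotient (QuotientGroup.mk' (Subgroup.center G))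
          (by rw [QuotientGroup.ker_mk']))).elim
    · subst hm
      exact IsPGroup.commutative_of_card_eq_prime_sq hQcard
  have hcomm' : ∀ x y : G, x * y * x⁻¹ * y⁻¹ ∈ Subgroup.center G := by
    intro x y
    rw [← QuotientGroup.eq_one_iff]
    have hxy : ((x * y * x⁻¹ * y⁻¹ : G) : G ⧸ Subgroup.center G)
        = (x : G ⧸ Subgroup.center G) * (y : G ⧸ Subgroup.center G)
          * (x : G ⧸ Subgroup.center G)⁻¹ * (y : G ⧸ Subgroup.center G)⁻¹ := by
      push_cast
      rfl
    rw [hxy, hQcomm (x : G ⧸ Subgroup.center G) (y : G ⧸ Subgroup.center G)]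
    group
  set c : G := a * b * a⁻¹ * b⁻¹ with hc
  have hcmem : c ∈ Subgroup.center G := hcomm' a b
  have hc1 : c ≠ 1 := by
    intro e
    apply hab
    calc a * b = (a * b * a⁻¹ * b⁻¹) * (b * a) := by group
      _ = b * a := by rw [← hc, e, one_mul]
  have hordc : orderOf c = p := orderOf_eq_prime (hpow c) hc1
  -- central movement helpers
  have hmove : ∀ (n : ℕ) (g : G), c ^ n * g = g * c ^ n := fun n g =>
    ((Subgroup.mem_center_iff.1 (pow_mem hcmem n)) g).symm
  have hmovinv : ∀ (n : ℕ) (g : G), (c ^ n)⁻¹ * g = g * (c ^ n)⁻¹ := fun n g =>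
    ((Subgroup.mem_center_iff.1 (inv_mem (pow_mem hcmem n))) g).symm
  have hfloat : ∀ (n : ℕ) (g h : G), g * ((c ^ n)⁻¹ * h) = (c ^ n)⁻¹ * (g * h) := by
    intro n g h
    rw [← mul_assoc, ← hmovinv, mul_assoc]
  have hfloatp : ∀ (n : ℕ) (g h : G), g * (c ^ n * h) = c ^ n * (g * h) := by
    intro n g h
    rw [← mul_assoc, ← hmove, mul_assoc]
  have hba : b * a = c⁻¹ * (a * b) := by rw [hc]; group
  -- commutation of powers
  have base1 : ∀ n : ℕ, b * a ^ n = (c ^ n)⁻¹ * (a ^ n * b) := by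
    intro n
    induction n with
    | zero => simp
    | succ n ih =>
        calc b * a ^ (n + 1) = (b * a ^ n) * a := by rw [pow_succ, ← mul_assoc]
          _ = (c ^ n)⁻¹ * (a ^ n * b) * a := by rw [ih]
          _ = (c ^ n)⁻¹ * (a ^ n * (b * a)) := by simp only [mul_assoc]
          _ = (c ^ n)⁻¹ * (a ^ n * (c⁻¹ * (a * b))) := by rw [hba]
          _ = (c ^ n)⁻¹ * (c⁻¹ * (a ^ n * (a * b))) := by
              rw [show a ^ n * (c⁻¹ * (a * b)) = c⁻¹ * (a ^ n * (a * b)) from by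
                have h1 := hfloat 1 (a ^ n) (a * b)
                rwa [pow_one] at h1]
          _ = ((c ^ n)⁻¹ * c⁻¹) * (a ^ n * a * b) := by simp only [mul_assoc]
          _ = (c ^ (n + 1))⁻¹ * (a ^ (n + 1) * b) := by
              have h5 : ((c : G) ^ (n + 1))⁻¹ = (c ^ n)⁻¹ * c⁻¹ := by
                rw [pow_succ']
                exact mul_inv_rev c (c ^ n)
              rw [h5, pow_succ a]
  have key : ∀ m n : ℕ, b ^ m * a ^ n = (c ^ (m * n))⁻¹ * (a ^ n * b ^ m) := by
    intro m n
    induction m with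
    | zero => simp
    | succ m ih =>
        calc b ^ (m + 1) * a ^ n = b ^ m * (b * a ^ n) := by rw [pow_succ, mul_assoc]
          _ = b ^ m * ((c ^ n)⁻¹ * (a ^ n * b)) := by rw [base1]
          _ = (c ^ n)⁻¹ * (b ^ m * (a ^ n * b)) := by rw [hfloat]
          _ = (c ^ n)⁻¹ * ((b ^ m * a ^ n) * b) := by simp only [mul_assoc]
          _ = (c ^ n)⁻¹ * (((c ^ (m * n))⁻¹ * (a ^ n * b ^ m)) * b) := by rw [ih]
          _ = ((c ^ n)⁻¹ * (c ^ (m * n))⁻¹) * (a ^ n * (b ^ m * b)) := by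
              simp only [mul_assoc]
          _ = (c ^ ((m + 1) * n))⁻¹ * (a ^ n * b ^ (m + 1)) := by
              rw [← mul_inv_rev, ← pow_add, pow_succ]
              have h4 : m * n + n = (m + 1) * n := by ring
              rw [show c ^ (m * n + n) = c ^ ((m + 1) * n) from by rw [h4]]
  -- power-by-val helpers
  have hval : ∀ (g : G) (m : ℕ), g ^ ((m : ZMod p)).val = g ^ m := by
    intro g m
    have h1 : m = p * (m / p) + m % p := (Nat.div_add_mod m p).symm
    rw [ZMod.val_natCast]
    conv_rhs => rw [h1]
    rw [pow_add, pow_mul, hpow, one_pow, one_mul]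
  have hvadd : ∀ (g : G) (s t : ZMod p), g ^ (s + t).val = g ^ s.val * g ^ t.val := by
    intro g s t
    have h1 : ((s.val + t.val : ℕ) : ZMod p) = s + t := by
      rw [Nat.cast_add, ZMod.natCast_val, ZMod.natCast_val, ZMod.cast_id, ZMod.cast_id]
    rw [← h1, hval, pow_add]
  have hvneg : ∀ (g : G) (s : ZMod p), g ^ (-s).val = (g ^ s.val)⁻¹ := by
    intro g s
    have h1 := hvadd g s (-s)
    rw [add_neg_cancel, ZMod.val_zero, pow_zero] at h1
    exact (inv_eq_of_mul_eq_one_right h1.symm).symm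
  have hvmulc : ∀ (s t : ZMod p), c ^ (s * t).val = c ^ (s.val * t.val) := by
    intro s t
    have h1 : ((s.val * t.val : ℕ) : ZMod p) = s * t := by
      rw [Nat.cast_mul, ZMod.natCast_val, ZMod.natCast_val, ZMod.cast_id, ZMod.cast_id]
    rw [← h1, hval]
  -- the underlying map
  set Φf : Heis p → G := fun v => a ^ v.x.val * b ^ v.y.val * c ^ v.z.val with hΦf
  have hΦmul : ∀ u v : Heis p, Φf (u * v) = Φf u * Φf v := by
    intro u v
    set I := u.x.val with hI
    set J := u.y.val with hJ
    set K := u.z.val with hK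
    set I' := v.x.val with hI'
    set J' := v.y.val with hJ'
    set K' := v.z.val with hK'
    have hLz : c ^ ((u * v).z).val = c ^ K * c ^ K' * (c ^ (J * I'))⁻¹ := by
      have h1 : (u * v).z = u.z + (v.z + (-(u.y * v.x))) := by
        rw [Heis.mul_z]; ring
      rw [h1, hvadd, hvadd, hvneg, hvmulc, mul_assoc]
    have hLx : a ^ ((u * v).x).val = a ^ I * a ^ I' := by
      rw [Heis.mul_x, hvadd]
    have hLy : b ^ ((u * v).y).val = b ^ J * b ^ J' := by
      rw [Heis.mul_y, hvadd]
    show a ^ ((u * v).x).val * b ^ ((u * v).y).val * c ^ ((u * v).z).val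
        = (a ^ I * b ^ J * c ^ K) * (a ^ I' * b ^ J' * c ^ K')
    rw [hLx, hLy, hLz]
    have hcswap : (c : G) ^ K' * c ^ K = c ^ K * c ^ K' := by
      rw [← pow_add, ← pow_add, Nat.add_comm]
    set E : G := c ^ (J * I') with hE
    have hL : (a ^ I * a ^ I') * (b ^ J * b ^ J') * (c ^ K * c ^ K' * E⁻¹)
        = E⁻¹ * (a ^ I * (a ^ I' * (b ^ J * (b ^ J' * (c ^ K * c ^ K'))))) := by
      simp only [mul_assoc]
      rw [hE, ← hmovinv (J * I') (c ^ K')]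
      rw [hfloat (J * I') (c ^ K) (c ^ K')]
      rw [hfloat (J * I') (b ^ J') (c ^ K * c ^ K')]
      rw [hfloat (J * I') (b ^ J) (b ^ J' * (c ^ K * c ^ K'))]
      rw [hfloat (J * I') (a ^ I') (b ^ J * (b ^ J' * (c ^ K * c ^ K')))]
      rw [hfloat (J * I') (a ^ I) (a ^ I' * (b ^ J * (b ^ J' * (c ^ K * c ^ K'))))]
    have hR : (a ^ I * b ^ J * c ^ K) * (a ^ I' * b ^ J' * c ^ K')
        = E⁻¹ * (a ^ I * (a ^ I' * (b ^ J * (b ^ J' * (c ^ K * c ^ K'))))) := by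
      simp only [mul_assoc]
      rw [hmove K (a ^ I' * (b ^ J' * c ^ K'))]
      simp only [mul_assoc]
      rw [← mul_assoc (b ^ J) (a ^ I') (b ^ J' * (c ^ K' * c ^ K))]
      rw [key J I']
      simp only [mul_assoc]
      rw [hE, hfloat (J * I') (a ^ I) (a ^ I' * (b ^ J * (b ^ J' * (c ^ K' * c ^ K))))]
      rw [hcswap]
    rw [hL, hR]
  -- conjugation identities
  have hconjb : ∀ v : Heis p, b * Φf v * b⁻¹ = (c ^ v.x.val)⁻¹ * Φf v := by
    intro v
    simp only [hΦf]
    set I := v.x.val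
    set J := v.y.val
    set K := v.z.val
    have hbb : b * b ^ J = b ^ J * b := (pow_mul_comm' b J).symm
    calc b * (a ^ I * b ^ J * c ^ K) * b⁻¹
        = (b * a ^ I) * (b ^ J * (c ^ K * b⁻¹)) := by simp only [mul_assoc]
      _ = ((c ^ I)⁻¹ * (a ^ I * b)) * (b ^ J * (c ^ K * b⁻¹)) := by rw [base1]
      _ = (c ^ I)⁻¹ * (a ^ I * ((b * b ^ J) * (c ^ K * b⁻¹))) := by simp only [mul_assoc]
      _ = (c ^ I)⁻¹ * (a ^ I * ((b ^ J * b) * (c ^ K * b⁻¹))) := by rw [hbb]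
      _ = (c ^ I)⁻¹ * (a ^ I * (b ^ J * ((b * c ^ K) * b⁻¹))) := by simp only [mul_assoc]
      _ = (c ^ I)⁻¹ * (a ^ I * (b ^ J * ((c ^ K * b) * b⁻¹))) := by
          rw [show b * c ^ K = c ^ K * b from (hmove K b).symm]
      _ = (c ^ I)⁻¹ * (a ^ I * b ^ J * c ^ K) := by
          simp only [mul_assoc, mul_inv_cancel, mul_one]
  have hconja : ∀ v : Heis p, a * Φf v * a⁻¹ = c ^ v.y.val * Φf v := by
    intro v
    simp only [hΦf]
    set I := v.x.val
    set J := v.y.val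
    set K := v.z.val
    have haa : a * a ^ I = a ^ I * a := (pow_mul_comm' a I).symm
    have ha_bJ : a * b ^ J = c ^ J * (b ^ J * a) := by
      have hk := key J 1
      rw [Nat.mul_one, pow_one] at hk
      rw [hk]
      group
    calc a * (a ^ I * b ^ J * c ^ K) * a⁻¹
        = (a * a ^ I) * (b ^ J * (c ^ K * a⁻¹)) := by simp only [mul_assoc]
      _ = (a ^ I * a) * (b ^ J * (c ^ K * a⁻¹)) := by rw [haa]
      _ = a ^ I * ((a * b ^ J) * (c ^ K * a⁻¹)) := by simp only [mul_assoc]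
      _ = a ^ I * ((c ^ J * (b ^ J * a)) * (c ^ K * a⁻¹)) := by rw [ha_bJ]
      _ = c ^ J * (a ^ I * (b ^ J * (a * (c ^ K * a⁻¹)))) := by
          simp only [mul_assoc]
          rw [hfloatp J (a ^ I) (b ^ J * (a * (c ^ K * a⁻¹)))]
      _ = c ^ J * (a ^ I * (b ^ J * ((c ^ K * a) * a⁻¹))) := by
          rw [show a * (c ^ K * a⁻¹) = (c ^ K * a) * a⁻¹ from by
            rw [← mul_assoc, ← hmove K a]]
      _ = c ^ J * (a ^ I * b ^ J * c ^ K) := by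
          simp only [mul_assoc, mul_inv_cancel, mul_one]
  -- order divisibility helper
  have hzero_of_pow : ∀ s : ZMod p, c ^ s.val = 1 → s = 0 := by
    intro s hs
    have hdvd : p ∣ s.val := by
      have h6 : orderOf c ∣ s.val := orderOf_dvd_of_pow_eq_one hs
      rwa [hordc] at h6
    have hlt : s.val < p := ZMod.val_lt s
    have : s.val = 0 := Nat.eq_zero_of_dvd_of_lt hdvd hlt
    exact (ZMod.val_eq_zero s).1 this
  -- kernel is trivial
  have hker : ∀ v : Heis p, Φf v = 1 → v = 1 := by
    intro v hv
    have hx0 : v.x = 0 := by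
      have h1 := hconjb v
      rw [hv] at h1
      simp only [mul_one, one_mul, mul_inv_cancel] at h1
      have h2 : c ^ v.x.val = 1 := by
        have h7 := congrArg (fun g : G => g⁻¹) h1
        simpa using h7.symm
      exact hzero_of_pow _ h2
    have hy0 : v.y = 0 := by
      have h1 := hconja v
      rw [hv] at h1
      simp only [mul_one, one_mul, mul_inv_cancel] at h1
      exact hzero_of_pow _ h1.symm
    have hz0 : v.z = 0 := by
      have h1 : Φf v = c ^ v.z.val := by
        simp only [hΦf, hx0, hy0, ZMod.val_zero, pow_zero, one_mul]
      rw [hv] at h1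
      exact hzero_of_pow _ h1.symm
    refine Heis.ext ?_ ?_ ?_ <;> simpa [hx0, hy0, hz0]
  -- center detection
  have hcent : ∀ v : Heis p, Φf v ∈ Subgroup.center G → v.x = 0 ∧ v.y = 0 := by
    intro v hv
    constructor
    · have hb := (Subgroup.mem_center_iff.1 hv) b
      -- hb : b * Φf v = Φf v * b
      have h1 : b * Φf v * b⁻¹ = Φf v := by
        rw [hb, mul_assoc, mul_inv_cancel, mul_one]
      rw [hconjb v] at h1
      have h2 : (c ^ v.x.val)⁻¹ = 1 := by
        have := mul_right_cancel (h1.trans (one_mul (Φf v)).symm)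
        exact this
      have h3 : c ^ v.x.val = 1 := inv_eq_one.mp h2
      exact hzero_of_pow _ h3
    · have ha := (Subgroup.mem_center_iff.1 hv) a
      have h1 : a * Φf v * a⁻¹ = Φf v := by
        rw [ha, mul_assoc, mul_inv_cancel, mul_one]
      rw [hconja v] at h1
      have h2 : c ^ v.y.val = 1 :=
        mul_right_cancel (h1.trans (one_mul (Φf v)).symm)
      exact hzero_of_pow _ h2
  -- assemble the monoid hom
  refine ⟨MonoidHom.mk' Φf hΦmul, ?_, ?_⟩
  · have hinj : Function.Injective (MonoidHom.mk' Φf hΦmul) :=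
      (injective_iff_map_eq_one (MonoidHom.mk' Φf hΦmul)).2 (fun v hv => hker v hv)
    have hcardH : Fintype.card (Heis p) = Fintype.card G := by
      rw [Heis.card_heis, hcard]
    exact (Fintype.bijective_iff_injective_and_card _).2 ⟨hinj, hcardH⟩
  · exact fun v hv => hcent v hv

end Classify

theorem stmt_9 (p : ℕ) (hp : p.Prime) (hodd : Odd p)
    {G : Type*} [Group G] [Fintype G]
    (hcard : Fintype.card G = p ^ 3)
    (hexp : Monoid.exponent G = p)
    (hna : ∃ a b : G, a * b ≠ b * a)
    (S : Multiset G) (hlen : Multiset.card S = 3 * p - 2)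
    (hcen : ∃ Z : Multiset G, Z ≤ S ∧ p - 2 ≤ Multiset.card Z ∧
      ∀ z ∈ Z, z ∈ Subgroup.center G) :
    HasProdOneSubseq S := by
  haveI : Fact p.Prime := ⟨hp⟩
  haveI : NeZero p := ⟨hp.ne_zero⟩
  obtain ⟨Z, hZS, hZcard, hZcen⟩ := hcen
  obtain ⟨Φ, hbij, hcent⟩ := heis_iso hp hcard hexp hna
  let e : Heis p ≃* G := MulEquiv.ofBijective Φ hbij
  have he : ∀ v : Heis p, e v = Φ v := fun v => rfl
  set S' : Multiset (Heis p) := S.map e.symm with hS'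
  have hS'len : Multiset.card S' = 3 * p - 2 := by
    rw [hS', Multiset.card_map, hlen]
  set W : Multiset (Heis p) := Z.map e.symm with hW
  have hWS' : W ≤ S' := Multiset.map_le_map hZS
  have hWcard : p - 2 ≤ Multiset.card W := by
    rw [hW, Multiset.card_map]; exact hZcard
  have hWc : ∀ w ∈ W, w.x = 0 ∧ w.y = 0 := by
    intro w hw
    obtain ⟨z, hz, rfl⟩ := Multiset.mem_map.1 hw
    apply hcent
    have h1 : Φ (e.symm z) = e (e.symm z) := (he _).symm
    rw [h1, MulEquiv.apply_symm_apply]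
    exact hZcen z hz
  obtain ⟨l', hne, hle, hprod⟩ := Heis.core hp hodd S' hS'len W hWS' hWcard hWc
  refine ⟨l'.map e, ?_, ?_, ?_⟩
  · simpa using hne
  · have h2 : ((l'.map e : List G) : Multiset G) = (l' : Multiset (Heis p)).map e := by
      simp
    rw [h2]
    have h3 : ((l' : Multiset (Heis p)).map e : Multiset G) ≤ S'.map e :=
      Multiset.map_le_map hle
    have h4 : S'.map e = S := by
      rw [hS', Multiset.map_map]
      have h5 : S.map (fun x => e (e.symm x)) = S.map id := by
        apply Multiset.map_congr rfl
        intro x _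
        exact e.apply_symm_apply x
      simpa using h5
    rwa [h4] at h3
  · rw [← map_list_prod e l', hprod, map_one]
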